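/- arXiv:1807.04138 — 2 statements merged into one kernel-verified Lean document; each statement's English description precedes it below -/
import Mathlib

section
/- On a quasi-para-Sasakian manifold, ∇_ξ φ = 0, ∇_ξ ξ = 0, and ∇_ξ η = 0. -/
/-- An abstract context for a (2n+1)-dimensional almost paracontact metric manifold:
`C` plays the role of the ring of smooth functions, `V` the module of vector fields,
with Lie bracket `bracket`, the derivation action `act` of vector fields on functions,
a (pseudo-Riemannian, nondegenerate) metric `g`, its Levi-Civita connection `nabla`
(characterized by being torsion-free and metric), and an almost paracontact metric
structure `(phi, xi, eta)`:  `φ² = Id − η ⊗ ξ`, `η(ξ) = 1`,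
`g(φX, φY) = −g(X,Y) + η(X)η(Y)`. -/
structure QPSCtx (C V : Type*) [CommRing C] [Algebra ℝ C]
    [AddCommGroup V] [Module C V] where
  bracket : V → V → V
  act : V → C → C
  act_add : ∀ X f₁ f₂, act X (f₁ + f₂) = act X f₁ + act X f₂
  act_mul : ∀ X f₁ f₂, act X (f₁ * f₂) = f₁ * act X f₂ + f₂ * act X f₁
  g : V → V → C
  g_symm : ∀ X Y, g X Y = g Y X
  g_addl : ∀ X Y Z, g (X + Y) Z = g X Z + g Y Z
  g_smull : ∀ (f : C) X Y, g (f • X) Y = f * g X Y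
  g_nondeg : ∀ X, (∀ Y, g X Y = 0) → X = 0
  nabla : V → V → V
  nabla_addl : ∀ X Y Z, nabla (X + Y) Z = nabla X Z + nabla Y Z
  nabla_addr : ∀ X Y Z, nabla X (Y + Z) = nabla X Y + nabla X Z
  nabla_smull : ∀ (f : C) X Y, nabla (f • X) Y = f • nabla X Y
  nabla_leibniz : ∀ X (f : C) Y, nabla X (f • Y) = act X f • Y + f • nabla X Y
  torsion_free : ∀ X Y, nabla X Y - nabla Y X = bracket X Y
  metric_compat : ∀ X Y Z, act X (g Y Z) = g (nabla X Y) Z + g Y (nabla X Z)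
  phi : V → V
  phi_add : ∀ X Y, phi (X + Y) = phi X + phi Y
  phi_smul : ∀ (f : C) X, phi (f • X) = f • phi X
  xi : V
  eta : V → C
  eta_add : ∀ X Y, eta (X + Y) = eta X + eta Y
  eta_smul : ∀ (f : C) X, eta (f • X) = f * eta X
  phi_sq : ∀ X, phi (phi X) = X - eta X • xi
  eta_xi : eta xi = 1
  compat : ∀ X Y, g (phi X) (phi Y) = - g X Y + eta X * eta Y

namespace QPSCtx
variable {C V : Type*} [CommRing C] [Algebra ℝ C] [AddCommGroup V] [Module C V]
variable (P : QPSCtx C V)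

/-- The `(1,1)`-tensor `A X = ∇_X ξ`. -/
def A (X : V) : V := P.nabla X P.xi

/-- The fundamental 2-form `Φ(X,Y) = g(X, φY)`. -/
def Phi (X Y : V) : C := P.g X (P.phi Y)

/-- `2 dη(X,Y) = X(η Y) − Y(η X) − η [X,Y]`. -/
def twoDeta (X Y : V) : C :=
  P.act X (P.eta Y) - P.act Y (P.eta X) - P.eta (P.bracket X Y)

/-- The Nijenhuis torsion `[φ,φ](X,Y) = φ²[X,Y] + [φX,φY] − φ[φX,Y] − φ[X,φY]`. -/
def nij (X Y : V) : V :=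
  P.phi (P.phi (P.bracket X Y)) + P.bracket (P.phi X) (P.phi Y)
    - P.phi (P.bracket (P.phi X) Y) - P.phi (P.bracket X (P.phi Y))

/-- Normality: `N⁽¹⁾(X,Y) = [φ,φ](X,Y) − 2dη(X,Y) ξ = 0`. -/
def Normal : Prop := ∀ X Y, P.nij X Y - P.twoDeta X Y • P.xi = 0

/-- Closedness of the fundamental 2-form: `3 dΦ(X,Y,Z) = 0`. -/
def PhiClosed : Prop := ∀ X Y Z,
  P.act X (P.Phi Y Z) - P.act Y (P.Phi X Z) + P.act Z (P.Phi X Y)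
    - P.Phi (P.bracket X Y) Z + P.Phi (P.bracket X Z) Y - P.Phi (P.bracket Y Z) X = 0

/-- Quasi-para-Sasakian: normal almost paracontact metric with closed fundamental form. -/
def QPS : Prop := P.Normal ∧ P.PhiClosed

/-- Para-Sasakian: normal with `Φ = dη`. -/
def ParaSasakian : Prop := P.Normal ∧ ∀ X Y, 2 * P.Phi X Y = P.twoDeta X Y

/-- The curvature tensor `R(X,Y)Z = ∇_X ∇_Y Z − ∇_Y ∇_X Z − ∇_{[X,Y]} Z`. -/
def R (X Y Z : V) : V :=
  P.nabla X (P.nabla Y Z) - P.nabla Y (P.nabla X Z) - P.nabla (P.bracket X Y) Z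

/-- The deformed 1-form `η̃ = α η`. -/
def etaT (α : ℝ) (X : V) : C := algebraMap ℝ C α * P.eta X

/-- The deformed Reeb field `ξ̃ = ξ / α`. -/
noncomputable def xiT (α : ℝ) : V := (algebraMap ℝ C α⁻¹) • P.xi

/-- The deformed metric `g̃ = β g + (α² − β) η ⊗ η`. -/
def gT (α β : ℝ) (X Y : V) : C :=
  algebraMap ℝ C β * P.g X Y + algebraMap ℝ C (α ^ 2 - β) * (P.eta X * P.eta Y)

/-- The deformed fundamental form `Φ̃(X,Y) = g̃(X, φ Y)`. -/
def PhiT (α β : ℝ) (X Y : V) : C := P.gT α β X (P.phi Y)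

end QPSCtx

/-! ### Auxiliary lemmas -/

lemma half_cancel {C : Type*} [CommRing C] [Algebra ℝ C] (x : C) (h : x + x = 0) : x = 0 := by
  have h2 : algebraMap ℝ C 2 * x = 0 := by
    rw [map_ofNat]; linear_combination h
  have h3 : algebraMap ℝ C (1/2) * (algebraMap ℝ C 2 * x) = 0 := by rw [h2, mul_zero]
  rw [← mul_assoc, ← map_mul] at h3
  norm_num at h3
  exact h3

namespace QPSCtx
variable {C V : Type*} [CommRing C] [Algebra ℝ C] [AddCommGroup V] [Module C V]
variable (P : QPSCtx C V)

/-- The function `c = η(φξ)`. -/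
def cc : C := P.eta (P.phi P.xi)

lemma cc_def : P.cc = P.eta (P.phi P.xi) := rfl

lemma g_addr (X Y Z : V) : P.g X (Y + Z) = P.g X Y + P.g X Z := by
  rw [P.g_symm, P.g_addl, P.g_symm Y X, P.g_symm Z X]

lemma g_smulr (f : C) (X Y : V) : P.g X (f • Y) = f * P.g X Y := by
  rw [P.g_symm, P.g_smull, P.g_symm]

lemma g_zerol (X : V) : P.g 0 X = 0 := by
  have := P.g_smull 0 0 X; simpa using this

lemma g_zeror (X : V) : P.g X 0 = 0 := by rw [P.g_symm]; exact P.g_zerol X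

lemma g_negl (X Y : V) : P.g (-X) Y = - P.g X Y := by
  have := P.g_smull (-1) X Y; simpa using this

lemma g_subl (X Y Z : V) : P.g (X - Y) Z = P.g X Z - P.g Y Z := by
  rw [sub_eq_add_neg, P.g_addl, P.g_negl, ← sub_eq_add_neg]

lemma g_subr (X Y Z : V) : P.g X (Y - Z) = P.g X Y - P.g X Z := by
  rw [P.g_symm, P.g_subl, P.g_symm Y X, P.g_symm Z X]

lemma eta_zero : P.eta 0 = 0 := by
  have := P.eta_smul 0 0; simpa using this

lemma eta_neg (X : V) : P.eta (-X) = - P.eta X := by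
  have := P.eta_smul (-1) X; simpa using this

lemma eta_sub (X Y : V) : P.eta (X - Y) = P.eta X - P.eta Y := by
  rw [sub_eq_add_neg, P.eta_add, P.eta_neg, ← sub_eq_add_neg]

lemma phi_zero : P.phi 0 = 0 := by
  have := P.phi_smul 0 0; simpa using this

lemma phi_neg (X : V) : P.phi (-X) = - P.phi X := by
  have := P.phi_smul (-1) X; simpa using this

lemma phi_sub (X Y : V) : P.phi (X - Y) = P.phi X - P.phi Y := by
  rw [sub_eq_add_neg, P.phi_add, P.phi_neg, ← sub_eq_add_neg]

lemma act_zero (X : V) : P.act X 0 = 0 := by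
  have := P.act_add X 0 0
  rw [add_zero] at this
  linear_combination -this

lemma act_one (X : V) : P.act X 1 = 0 := by
  have := P.act_mul X 1 1
  rw [mul_one, one_mul] at this
  linear_combination -this

lemma act_neg_one (X : V) : P.act X (-1) = 0 := by
  have h := P.act_add X 1 (-1)
  rw [add_neg_cancel, P.act_zero, P.act_one] at h
  linear_combination -h

lemma nabla_negr (X Y : V) : P.nabla X (-Y) = - P.nabla X Y := by
  have h := P.nabla_leibniz X (-1) Y
  rw [neg_one_smul, P.act_neg_one, zero_smul, zero_add, neg_one_smul] at h
  exact h

lemma nabla_subr (X Y Z : V) : P.nabla X (Y - Z) = P.nabla X Y - P.nabla X Z := by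
  rw [sub_eq_add_neg, P.nabla_addr, P.nabla_negr, ← sub_eq_add_neg]

lemma nabla_subl (X Y Z : V) : P.nabla (X - Y) Z = P.nabla X Z - P.nabla Y Z := by
  rw [sub_eq_add_neg, ← neg_one_smul C Y, P.nabla_addl, P.nabla_smull, neg_one_smul,
    ← sub_eq_add_neg]

lemma bracket_eq (X Y : V) : P.bracket X Y = P.nabla X Y - P.nabla Y X :=
  (P.torsion_free X Y).symm

lemma bracket_self (X : V) : P.bracket X X = 0 := by
  rw [P.bracket_eq, sub_self]

lemma phi_phi_xi : P.phi (P.phi P.xi) = 0 := by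
  rw [P.phi_sq, P.eta_xi, one_smul, sub_self]

lemma phi_xi : P.phi P.xi = P.cc • P.xi := by
  have h := P.phi_sq (P.phi P.xi)
  rw [P.phi_phi_xi, P.phi_zero] at h
  exact sub_eq_zero.mp h.symm

lemma cc_sq : P.cc * P.cc = 0 := by
  have h : P.phi (P.cc • P.xi) = (P.cc * P.cc) • P.xi := by
    rw [P.phi_smul, P.phi_xi, smul_smul]
  rw [← P.phi_xi, P.phi_phi_xi] at h
  have h2 := congrArg P.eta h.symm
  rw [P.eta_smul, P.eta_xi, mul_one, P.eta_zero] at h2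
  exact h2

lemma eta_phi (X : V) : P.eta (P.phi X) = P.cc * P.eta X := by
  have h1 := P.phi_sq (P.phi X)
  have h2 : P.phi (P.phi (P.phi X)) = P.phi X - (P.eta X * P.cc) • P.xi := by
    rw [P.phi_sq X, P.phi_sub, P.phi_smul, P.phi_xi, smul_smul]
  have h5 := congrArg P.eta (h1.symm.trans h2)
  rw [P.eta_sub, P.eta_sub, P.eta_smul, P.eta_smul, P.eta_xi, mul_one, mul_one] at h5
  linear_combination -h5

lemma g_phixi_l (Y : V) : P.g (P.phi P.xi) Y = P.cc * P.eta Y := by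
  have h := P.compat (P.phi P.xi) Y
  rw [P.phi_phi_xi, P.g_zerol] at h
  rw [P.cc_def]
  linear_combination h

lemma g_xi_r (X : V) : P.g X P.xi = P.eta X := by
  have h2 := P.compat P.xi X
  rw [P.eta_xi, one_mul, P.g_phixi_l, P.eta_phi] at h2
  rw [P.g_symm]
  linear_combination h2 - P.eta X * P.cc_sq

lemma g_xixi : P.g P.xi P.xi = 1 := by rw [P.g_xi_r, P.eta_xi]

lemma g_phi_swap (X Y : V) :
    P.g (P.phi X) Y = - P.g X (P.phi Y) + 2 * P.cc * P.eta X * P.eta Y := by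
  have h := P.compat X (P.phi Y)
  rw [P.phi_sq Y, P.g_subr, P.g_smulr, P.g_xi_r, P.eta_phi, P.eta_phi] at h
  linear_combination h

lemma phi_xx (X : V) : P.g X (P.phi X) = P.cc * P.eta X * P.eta X := by
  have h := P.g_phi_swap X X
  rw [P.g_symm (P.phi X) X] at h
  have h2 : (P.g X (P.phi X) - P.cc * P.eta X * P.eta X)
      + (P.g X (P.phi X) - P.cc * P.eta X * P.eta X) = 0 := by linear_combination h
  have h3 := half_cancel _ h2
  linear_combination h3

lemma act_cc (hQ : P.QPS) (Z : V) : P.act Z P.cc = 0 := by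
  have h := hQ.2 P.xi P.xi Z
  simp only [QPSCtx.Phi] at h
  rw [P.bracket_self, P.g_zerol] at h
  have e1 : P.g P.xi (P.phi P.xi) = P.cc := by
    rw [P.g_symm, P.g_xi_r, P.cc_def]
  rw [e1] at h
  linear_combination h

lemma act_cc_eta (hQ : P.QPS) (Z Y : V) : P.act Z (P.cc * P.eta Y) = 0 := by
  have key : ∀ X, P.act Z (P.g X (P.phi X)) = 0 := by
    intro X
    have h := hQ.2 X X Z
    simp only [QPSCtx.Phi] at h
    rw [P.bracket_self, P.g_zerol] at h
    linear_combination h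
  have h1 := key Y
  have h2 := key (Y + P.xi)
  rw [P.phi_xx] at h1
  rw [P.phi_xx, P.eta_add, P.eta_xi] at h2
  have e : P.cc * (P.eta Y + 1) * (P.eta Y + 1)
      = P.cc * P.eta Y * P.eta Y + (P.cc * P.eta Y + (P.cc * P.eta Y + P.cc)) := by ring
  rw [e, P.act_add, P.act_add, P.act_add, h1, P.act_cc hQ] at h2
  apply half_cancel
  linear_combination h2

lemma cc_act_eta (hQ : P.QPS) (Z Y : V) : P.cc * P.act Z (P.eta Y) = 0 := by
  have h := P.act_mul Z P.cc (P.eta Y)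
  rw [P.act_cc_eta hQ, P.act_cc hQ] at h
  linear_combination -h

lemma B_xi (X : V) : P.g (P.nabla X P.xi) P.xi = 0 := by
  have h := P.metric_compat X P.xi P.xi
  rw [P.g_xixi, P.act_one, P.g_symm P.xi (P.nabla X P.xi)] at h
  exact half_cancel _ (by linear_combination -h)

lemma eta_nabla_xi (X : V) : P.eta (P.nabla X P.xi) = 0 := by
  rw [← P.g_xi_r]; exact P.B_xi X

lemma act_eta_eq (W Y : V) :
    P.act W (P.eta Y) = P.eta (P.nabla W Y) + P.g (P.nabla W P.xi) Y := by
  have h := P.metric_compat W Y P.xi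
  rw [P.g_xi_r, P.g_xi_r, P.g_symm Y (P.nabla W P.xi)] at h
  exact h

lemma twoDeta_eq (X Y : V) :
    P.twoDeta X Y = P.g (P.nabla X P.xi) Y - P.g (P.nabla Y P.xi) X := by
  simp only [QPSCtx.twoDeta]
  rw [P.act_eta_eq, P.act_eta_eq, P.bracket_eq, P.eta_sub]
  ring

lemma cc_eta_nabla (hQ : P.QPS) (W Y : V) :
    P.cc * P.eta (P.nabla W Y) = - (P.cc * P.g (P.nabla W P.xi) Y) := by
  have h := P.cc_act_eta hQ W Y
  rw [P.act_eta_eq] at h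
  linear_combination h

lemma cc_eta_bracket (hQ : P.QPS) (X Y : V) :
    P.cc * P.eta (P.bracket X Y)
      = P.cc * P.g (P.nabla Y P.xi) X - P.cc * P.g (P.nabla X P.xi) Y := by
  rw [P.bracket_eq, P.eta_sub]
  have h1 := P.cc_eta_nabla hQ X Y
  have h2 := P.cc_eta_nabla hQ Y X
  linear_combination h1 - h2

lemma bracket_ccxi (hQ : P.QPS) (W : V) :
    P.bracket (P.cc • P.xi) W = P.cc • P.bracket P.xi W := by
  rw [P.bracket_eq, P.bracket_eq, P.nabla_smull, P.nabla_leibniz, P.act_cc hQ,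
    zero_smul, zero_add, smul_sub]

lemma twoDeta_xi (hQ : P.QPS) (Y : V) : P.twoDeta P.xi Y = 0 := by
  have h := hQ.1 P.xi Y
  simp only [QPSCtx.nij] at h
  rw [P.phi_xi, P.bracket_ccxi hQ, P.bracket_ccxi hQ, P.phi_smul] at h
  have h2 := congrArg P.eta h
  simp only [P.eta_sub, P.eta_add, P.eta_smul, P.eta_zero, P.eta_xi] at h2
  simp only [P.eta_phi] at h2
  linear_combination -h2

lemma eta_bracket_xi (hQ : P.QPS) (Y : V) :
    P.eta (P.bracket P.xi Y) = P.act P.xi (P.eta Y) := by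
  have h := P.twoDeta_xi hQ Y
  simp only [QPSCtx.twoDeta] at h
  rw [P.eta_xi, P.act_one] at h
  linear_combination -h

lemma nabla_xi_xi (hQ : P.QPS) : P.nabla P.xi P.xi = 0 := by
  apply P.g_nondeg
  intro Z
  have h := P.metric_compat P.xi P.xi Z
  have e1 : P.g P.xi Z = P.eta Z := by rw [P.g_symm, P.g_xi_r]
  rw [e1] at h
  have e2 : P.g P.xi (P.nabla P.xi Z) = P.act P.xi (P.eta Z) := by
    rw [P.g_symm, P.g_xi_r]
    have e3 : P.nabla P.xi Z = P.bracket P.xi Z + P.nabla Z P.xi := by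
      rw [P.bracket_eq]; abel
    rw [e3, P.eta_add, P.eta_bracket_xi hQ, P.eta_nabla_xi, add_zero]
  rw [e2] at h
  linear_combination -h

lemma eta_nabla_xi_r (hQ : P.QPS) (Y : V) :
    P.eta (P.nabla P.xi Y) = P.act P.xi (P.eta Y) := by
  have e3 : P.nabla P.xi Y = P.bracket P.xi Y + P.nabla Y P.xi := by
    rw [P.bracket_eq]; abel
  rw [e3, P.eta_add, P.eta_bracket_xi hQ, P.eta_nabla_xi, add_zero]

lemma lie_phi (hQ : P.QPS) (Y : V) :
    P.bracket P.xi (P.phi Y) = P.phi (P.bracket P.xi Y) := by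
  have h := hQ.1 P.xi Y
  rw [P.twoDeta_xi hQ, zero_smul, sub_zero] at h
  simp only [QPSCtx.nij] at h
  rw [P.phi_xi, P.bracket_ccxi hQ, P.bracket_ccxi hQ, P.phi_smul] at h
  have h4 := congrArg (P.cc • ·) h
  simp only [smul_add, smul_sub, smul_zero, smul_smul, P.cc_sq, zero_smul,
    add_zero, sub_zero] at h4
  have h4c := sub_eq_zero.mp h4
  have hphi := congrArg P.phi h
  simp only [P.phi_add, P.phi_sub, P.phi_smul, P.phi_zero] at hphi
  rw [h4c] at hphi
  have h5 : P.phi (P.phi (P.phi (P.bracket P.xi Y)))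
      - P.phi (P.phi (P.bracket P.xi (P.phi Y))) = 0 := by
    rw [← hphi]; abel
  have h6 := sub_eq_zero.mp h5
  rw [P.phi_sq (P.bracket P.xi Y)] at h6
  rw [P.phi_sq (P.bracket P.xi (P.phi Y))] at h6
  rw [P.phi_sub, P.phi_smul, P.phi_xi, smul_smul] at h6
  have e7 : P.eta (P.bracket P.xi Y) * P.cc = 0 := by
    rw [P.eta_bracket_xi hQ]
    have := P.cc_act_eta hQ P.xi Y
    linear_combination this
  have e8 : P.eta (P.bracket P.xi (P.phi Y)) = 0 := by
    rw [P.eta_bracket_xi hQ, P.eta_phi]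
    exact P.act_cc_eta hQ P.xi Y
  rw [e7, e8, zero_smul, sub_zero, sub_zero] at h6
  exact h6.symm

lemma K2 (hQ : P.QPS) (Y Z : V) :
    P.g (P.nabla Y P.xi) (P.phi Z) + P.g (P.nabla (P.phi Z) P.xi) Y
      = P.cc * P.g (P.nabla Z P.xi) Y - P.cc * P.g (P.nabla Y P.xi) Z := by
  have h := hQ.2 P.xi Y Z
  simp only [QPSCtx.Phi] at h
  have ePz : P.g P.xi (P.phi Z) = P.cc * P.eta Z := by
    rw [P.g_symm, P.g_xi_r, P.eta_phi]
  have ePy : P.g P.xi (P.phi Y) = P.cc * P.eta Y := by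
    rw [P.g_symm, P.g_xi_r, P.eta_phi]
  rw [ePz, ePy, P.act_cc_eta hQ Y Z, P.act_cc_eta hQ Z Y] at h
  rw [P.phi_xi, P.g_smulr, P.g_xi_r] at h
  rw [P.metric_compat P.xi Y (P.phi Z)] at h
  have e1 : P.nabla P.xi Y = P.bracket P.xi Y + P.nabla Y P.xi := by
    rw [P.bracket_eq]; abel
  have e2 : P.nabla P.xi (P.phi Z) = P.phi (P.bracket P.xi Z) + P.nabla (P.phi Z) P.xi := by
    rw [← P.lie_phi hQ, P.bracket_eq]; abel
  rw [e1, e2, P.g_addl, P.g_addr] at h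
  have e3 : P.g (P.bracket P.xi Z) (P.phi Y)
      = - P.g Y (P.phi (P.bracket P.xi Z))
        + 2 * P.cc * P.eta Y * P.eta (P.bracket P.xi Z) := by
    rw [P.g_symm, P.g_phi_swap]
  rw [e3] at h
  have e4 : P.cc * P.eta (P.bracket P.xi Z) = 0 := by
    rw [P.eta_bracket_xi hQ]; exact P.cc_act_eta hQ P.xi Z
  have e5 := P.cc_eta_bracket hQ Y Z
  have e6 : P.g Y (P.nabla (P.phi Z) P.xi) = P.g (P.nabla (P.phi Z) P.xi) Y :=
    P.g_symm _ _
  linear_combination h - e6 - 2 * P.eta Y * e4 + e5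

lemma star (hQ : P.QPS) (X Y : V) :
    -(P.twoDeta (P.phi X) (P.phi Y)) - P.cc * P.eta (P.bracket (P.phi X) Y)
      - P.cc * P.eta (P.bracket X (P.phi Y)) = P.twoDeta X Y := by
  have h2 := congrArg P.eta (hQ.1 X Y)
  simp only [QPSCtx.nij, P.eta_sub, P.eta_add, P.eta_smul, P.eta_zero, P.eta_xi] at h2
  simp only [P.eta_phi] at h2
  have e1 : P.eta (P.bracket (P.phi X) (P.phi Y)) = - P.twoDeta (P.phi X) (P.phi Y) := by
    simp only [QPSCtx.twoDeta]
    simp only [P.eta_phi]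
    rw [P.act_cc_eta hQ (P.phi X) Y, P.act_cc_eta hQ (P.phi Y) X]
    ring
  rw [e1] at h2
  linear_combination h2 - P.eta (P.bracket X Y) * P.cc_sq

lemma B_phi (hQ : P.QPS) (Y Z : V) :
    P.g (P.nabla (P.phi Y) P.xi) Z + P.g (P.nabla Y P.xi) (P.phi Z) = 0 := by
  have hstar := P.star hQ Y (P.phi Z)
  rw [P.phi_sq Z] at hstar
  have enz : P.nabla (Z - P.eta Z • P.xi) P.xi = P.nabla Z P.xi := by
    rw [P.nabla_subl, P.nabla_smull, P.nabla_xi_xi hQ, smul_zero, sub_zero]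
  have eA : P.twoDeta (P.phi Y) (Z - P.eta Z • P.xi)
      = P.g (P.nabla (P.phi Y) P.xi) Z - P.g (P.nabla Z P.xi) (P.phi Y) := by
    rw [P.twoDeta_eq, P.g_subr, P.g_smulr, P.B_xi, enz]
    ring
  have eB : P.cc * P.eta (P.bracket Y (Z - P.eta Z • P.xi))
      = P.cc * P.eta (P.bracket Y Z) := by
    rw [P.cc_eta_bracket hQ, P.cc_eta_bracket hQ, enz, P.g_subr, P.g_smulr, P.B_xi]
    ring
  have eC : P.cc * P.eta (P.bracket (P.phi Y) (P.phi Z))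
      = P.cc * (P.g (P.nabla Y P.xi) Z - P.g (P.nabla Z P.xi) Y) := by
    have hs := P.star hQ Y Z
    have e1 : P.eta (P.bracket (P.phi Y) (P.phi Z)) = - P.twoDeta (P.phi Y) (P.phi Z) := by
      simp only [QPSCtx.twoDeta]
      simp only [P.eta_phi]
      rw [P.act_cc_eta hQ (P.phi Y) Z, P.act_cc_eta hQ (P.phi Z) Y]
      ring
    rw [P.twoDeta_eq Y Z] at hs
    rw [e1]
    linear_combination P.cc * hs
      + (P.eta (P.bracket (P.phi Y) Z) + P.eta (P.bracket Y (P.phi Z))) * P.cc_sq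
  rw [eA, eB, eC, P.cc_eta_bracket hQ Y Z, P.twoDeta_eq Y (P.phi Z)] at hstar
  have k1 := P.K2 hQ Z Y
  have k2 := P.K2 hQ Y Z
  have h2 : (P.g (P.nabla (P.phi Y) P.xi) Z + P.g (P.nabla Y P.xi) (P.phi Z))
      + (P.g (P.nabla (P.phi Y) P.xi) Z + P.g (P.nabla Y P.xi) (P.phi Z)) = 0 := by
    linear_combination k1 + k2 - hstar
  exact half_cancel _ h2

end QPSCtx

theorem stmt4 {C V : Type*} [CommRing C] [Algebra ℝ C] [AddCommGroup V] [Module C V]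
    (P : QPSCtx C V) (h : P.QPS) :
    (∀ Y, P.nabla P.xi (P.phi Y) - P.phi (P.nabla P.xi Y) = 0) ∧
    P.nabla P.xi P.xi = 0 ∧
    (∀ Y, P.act P.xi (P.eta Y) - P.eta (P.nabla P.xi Y) = 0) := by
  refine ⟨?_, P.nabla_xi_xi h, ?_⟩
  · intro Y
    have e1 : P.nabla P.xi (P.phi Y)
        = P.phi (P.bracket P.xi Y) + P.nabla (P.phi Y) P.xi := by
      rw [← P.lie_phi h, P.bracket_eq]; abel
    have e2 : P.phi (P.nabla P.xi Y)
        = P.phi (P.bracket P.xi Y) + P.phi (P.nabla Y P.xi) := by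
      rw [← P.phi_add]
      congr 1
      rw [P.bracket_eq]; abel
    have e3 : P.nabla (P.phi Y) P.xi - P.phi (P.nabla Y P.xi) = 0 := by
      apply P.g_nondeg
      intro Z
      rw [P.g_subl]
      have h1 := P.B_phi h Y Z
      have h2 : P.g (P.phi (P.nabla Y P.xi)) Z
          = - P.g (P.nabla Y P.xi) (P.phi Z)
            + 2 * P.cc * P.eta (P.nabla Y P.xi) * P.eta Z := P.g_phi_swap _ _
      rw [P.eta_nabla_xi] at h2
      linear_combination h1 - h2
    have e4 : (P.phi (P.bracket P.xi Y) + P.nabla (P.phi Y) P.xi)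
        - (P.phi (P.bracket P.xi Y) + P.phi (P.nabla Y P.xi))
        = P.nabla (P.phi Y) P.xi - P.phi (P.nabla Y P.xi) := by abel
    rw [e1, e2, e4, e3]
  · intro Y
    rw [P.eta_nabla_xi_r h, sub_self]
end

section
/- On a quasi-para-Sasakian manifold, the tensor A defined by AX = ∇_X ξ commutes with φ: A(φX) = φ(AX) for all vector fields X. -/
theorem stmt5 {C V : Type*} [CommRing C] [Algebra ℝ C] [AddCommGroup V] [Module C V]
    (P : QPSCtx C V) (h : P.QPS) :
    ∀ X, P.A (P.phi X) = P.phi (P.A X) := by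
  obtain ⟨hN, hP⟩ := h
  -- halving lemma
  have h2 : ∀ t : C, t + t = 0 → t = 0 := by
    intro t ht
    have h1 : (algebraMap ℝ C) (1/2) + (algebraMap ℝ C) (1/2) = 1 := by
      rw [← map_add]; norm_num
    calc t = ((algebraMap ℝ C) (1/2) + (algebraMap ℝ C) (1/2)) * t := by rw [h1, one_mul]
    _ = (algebraMap ℝ C) (1/2) * (t + t) := by ring
    _ = 0 := by rw [ht, mul_zero]
  have hact0 : ∀ X : V, P.act X 0 = 0 := by
    intro X
    have := P.act_add X 0 0
    rw [add_zero] at this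
    linear_combination -this
  have hact1 : ∀ X : V, P.act X 1 = 0 := by
    intro X
    have := P.act_mul X 1 1
    rw [one_mul] at this
    linear_combination -this
  have hactm1 : ∀ X : V, P.act X (-1) = 0 := by
    intro X
    have := P.act_add X 1 (-1)
    rw [add_neg_cancel] at this
    rw [hact0, hact1] at this
    linear_combination -this
  -- g linearity
  have hgr : ∀ (X : V) (f : C) (Y : V), P.g X (f • Y) = f * P.g X Y := by
    intro X f Y; rw [P.g_symm, P.g_smull, P.g_symm]
  have hgra : ∀ X Y Z : V, P.g X (Y + Z) = P.g X Y + P.g X Z := by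
    intro X Y Z; rw [P.g_symm, P.g_addl, P.g_symm Y X, P.g_symm Z X]
  have hgln : ∀ X Y : V, P.g (-X) Y = - P.g X Y := by
    intro X Y; rw [← neg_one_smul C X, P.g_smull]; ring
  have hgrn : ∀ X Y : V, P.g X (-Y) = - P.g X Y := by
    intro X Y; rw [P.g_symm, hgln, P.g_symm]
  have hgsl : ∀ X Y Z : V, P.g (X - Y) Z = P.g X Z - P.g Y Z := by
    intro X Y Z; rw [sub_eq_add_neg, P.g_addl, hgln, sub_eq_add_neg]
  have hgsr : ∀ X Y Z : V, P.g X (Y - Z) = P.g X Y - P.g X Z := by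
    intro X Y Z; rw [sub_eq_add_neg, hgra, hgrn, sub_eq_add_neg]
  have hg0l : ∀ Y : V, P.g 0 Y = 0 := by
    intro Y
    have := P.g_smull 0 0 Y
    rw [zero_smul, zero_mul] at this; exact this
  -- phi linearity
  have hphin : ∀ X : V, P.phi (-X) = - P.phi X := by
    intro X; rw [← neg_one_smul C X, P.phi_smul, neg_one_smul]
  have hphis : ∀ X Y : V, P.phi (X - Y) = P.phi X - P.phi Y := by
    intro X Y; rw [sub_eq_add_neg, P.phi_add, hphin, sub_eq_add_neg]
  have hphi0 : P.phi 0 = 0 := by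
    have := P.phi_smul 0 0
    rw [zero_smul, zero_smul] at this; exact this
  -- eta linearity
  have hetan : ∀ X : V, P.eta (-X) = - P.eta X := by
    intro X; rw [← neg_one_smul C X, P.eta_smul]; ring
  have hetas : ∀ X Y : V, P.eta (X - Y) = P.eta X - P.eta Y := by
    intro X Y; rw [sub_eq_add_neg, P.eta_add, hetan, sub_eq_add_neg]
  have heta0 : P.eta 0 = 0 := by
    have := P.eta_smul 0 0
    rw [zero_smul, zero_mul] at this; exact this
  -- nabla linearity
  have hnn : ∀ X Y : V, P.nabla X (-Y) = - P.nabla X Y := by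
    intro X Y
    rw [← neg_one_smul C Y, P.nabla_leibniz, hactm1, zero_smul, zero_add, neg_one_smul]
  have hnsr : ∀ X Y Z : V, P.nabla X (Y - Z) = P.nabla X Y - P.nabla X Z := by
    intro X Y Z; rw [sub_eq_add_neg, P.nabla_addr, hnn, sub_eq_add_neg]
  have hnsl : ∀ X Y Z : V, P.nabla (X - Y) Z = P.nabla X Z - P.nabla Y Z := by
    intro X Y Z
    rw [sub_eq_add_neg, P.nabla_addl, ← neg_one_smul C Y, P.nabla_smull, neg_one_smul,
      sub_eq_add_neg]
  -- bracket
  have hbr : ∀ X Y : V, P.bracket X Y = P.nabla X Y - P.nabla Y X := fun X Y =>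
    (P.torsion_free X Y).symm
  have hbrne : ∀ X Y : V, P.bracket X Y = - P.bracket Y X := by
    intro X Y; rw [hbr, hbr]; module
  have hbrsm : ∀ (X : V) (f : C) (Y : V),
      P.bracket X (f • Y) = f • P.bracket X Y + (P.act X f) • Y := by
    intro X f Y
    rw [hbr, hbr, P.nabla_leibniz, P.nabla_smull]
    module
  have hbrsub : ∀ (U Y : V) (f : C),
      P.bracket U (Y - f • P.xi)
        = P.bracket U Y - f • P.bracket U P.xi - (P.act U f) • P.xi := by
    intro U Y f
    rw [hbr, hbr, hbr, hnsr, hnsl, P.nabla_leibniz, P.nabla_smull]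
    module
  -- the key scalar c = eta(phi xi)
  set c := P.eta (P.phi P.xi) with hcdef
  have hppx : P.phi (P.phi P.xi) = 0 := by
    rw [P.phi_sq, P.eta_xi, one_smul, sub_self]
  have hpx : P.phi P.xi = c • P.xi := by
    have hx := P.phi_sq (P.phi P.xi)
    rw [hppx, hphi0, ← hcdef] at hx
    linear_combination (norm := module) -hx
  have hc2 : c * c = 0 := by
    have hx := hppx
    rw [hpx, P.phi_smul, hpx, smul_smul] at hx
    have h3 := congrArg P.eta hx
    rw [P.eta_smul, P.eta_xi, heta0, mul_one] at h3
    exact h3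
  have hetaphi : ∀ X : V, P.eta (P.phi X) = c * P.eta X := by
    intro X
    have hx := P.phi_sq (P.phi X)
    rw [P.phi_sq X, hphis, P.phi_smul, hpx, smul_smul] at hx
    have h3 : (P.eta (P.phi X) - P.eta X * c) • P.xi = 0 := by
      linear_combination (norm := module) hx
    have h4 := congrArg P.eta h3
    rw [P.eta_smul, P.eta_xi, heta0, mul_one] at h4
    linear_combination h4
  have hgxi : ∀ Y : V, P.g P.xi Y = P.eta Y := by
    intro Y
    have e1 := P.compat P.xi Y
    rw [hpx, P.g_smull, P.eta_xi, one_mul] at e1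
    have e2 := P.compat P.xi (P.phi Y)
    rw [hpx, P.g_smull, P.phi_sq Y, hgsr, hgr, P.eta_xi, one_mul, hetaphi] at e2
    linear_combination e1 - c * e2 + (P.g P.xi Y - P.eta Y * P.g P.xi P.xi - P.eta Y) * hc2
  have hgxiR : ∀ W : V, P.g W P.xi = P.eta W := by
    intro W; rw [P.g_symm, hgxi]
  have hgxix : P.g P.xi P.xi = 1 := by rw [hgxi, P.eta_xi]
  have hSk : ∀ U W : V, P.g (P.phi U) W = - P.g U (P.phi W) + 2*c*P.eta U*P.eta W := by
    intro U W
    have e := P.compat U (P.phi W)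
    rw [P.phi_sq W, hgsr, hgr, hgxiR (P.phi U), hetaphi U, hetaphi W] at e
    linear_combination e
  have hetapp : ∀ W : V, P.eta (P.phi (P.phi W)) = 0 := by
    intro W; rw [P.phi_sq W, hetas, P.eta_smul, P.eta_xi, mul_one, sub_self]
  -- connection basics
  have hA1 : ∀ X : V, P.g (P.nabla X P.xi) P.xi = 0 := by
    intro X
    have e := P.metric_compat X P.xi P.xi
    rw [hgxix, hact1, P.g_symm P.xi (P.nabla X P.xi)] at e
    exact h2 _ e.symm
  have hA1' : ∀ X : V, P.eta (P.nabla X P.xi) = 0 := by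
    intro X; rw [← hgxi, P.g_symm]; exact hA1 X
  have hacteta : ∀ X Y : V, P.act X (P.eta Y)
      = P.g (P.nabla X P.xi) Y + P.eta (P.nabla X Y) := by
    intro X Y
    have e := P.metric_compat X P.xi Y
    rw [hgxi Y, hgxi (P.nabla X Y)] at e
    exact e
  have htd : ∀ X Y : V, P.twoDeta X Y
      = P.act X (P.eta Y) - P.act Y (P.eta X) - P.eta (P.bracket X Y) := fun X Y => rfl
  have hdE : ∀ X Y : V,
      P.g (P.nabla X P.xi) Y - P.g (P.nabla Y P.xi) X = P.twoDeta X Y := by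
    intro X Y
    have e1 := hacteta X Y
    have e2 := hacteta Y X
    have e3 : P.eta (P.bracket X Y) = P.eta (P.nabla X Y) - P.eta (P.nabla Y X) := by
      rw [hbr, hetas]
    rw [htd, e3]
    linear_combination e2 - e1
  -- act-linearity in the vector slot (for functions of the form g Y Z)
  have hactgsm : ∀ (f : C) (U Y Z : V), P.act (f • U) (P.g Y Z) = f * P.act U (P.g Y Z) := by
    intro f U Y Z
    rw [P.metric_compat, P.metric_compat, P.nabla_smull, P.nabla_smull, P.g_smull, hgr]
    ring
  have hactgsub : ∀ (U : V) (f : C) (W Y Z : V),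
      P.act (U - f • W) (P.g Y Z) = P.act U (P.g Y Z) - f * P.act W (P.g Y Z) := by
    intro U f W Y Z
    rw [P.metric_compat, P.metric_compat, P.metric_compat, hnsl, hnsl, P.nabla_smull,
      P.nabla_smull, hgsl, hgsr, P.g_smull, hgr]
    ring
  have hcg : c = P.g P.xi (P.phi P.xi) := by rw [hgxi]
  have hactcpp : ∀ X : V, P.act (P.phi (P.phi X)) c = P.act X c - P.eta X * P.act P.xi c := by
    intro X
    rw [hcg, P.phi_sq X]
    exact hactgsub X (P.eta X) P.xi P.xi (P.phi P.xi)
  have hactcsm : P.act (c • P.xi) c = c * P.act P.xi c := by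
    rw [hcg]
    exact hactgsm _ P.xi P.xi (P.phi P.xi)
  -- eta of the normality tensor
  have hstar : ∀ X Y : V, P.eta (P.bracket (P.phi X) (P.phi Y)) =
      P.twoDeta X Y + c * P.eta (P.bracket (P.phi X) Y)
        + c * P.eta (P.bracket X (P.phi Y)) := by
    intro X Y
    have n := hN X Y
    simp only [QPSCtx.nij] at n
    have n2 := congrArg P.eta n
    simp only [hetas, P.eta_add, P.eta_smul, hetaphi, P.eta_xi, heta0] at n2
    linear_combination n2 - P.eta (P.bracket X Y) * hc2
  have hstarc : ∀ X Y : V, c * P.eta (P.bracket (P.phi X) (P.phi Y)) = c * P.twoDeta X Y := by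
    intro X Y
    linear_combination c * hstar X Y
      + (P.eta (P.bracket (P.phi X) Y) + P.eta (P.bracket X (P.phi Y))) * hc2
  -- the normality identity at (X, xi)
  have hV1 : ∀ X : V,
      P.bracket X P.xi + c • P.bracket (P.phi X) P.xi - P.phi (P.bracket (P.phi X) P.xi)
        - c • P.phi (P.bracket X P.xi)
      = (-(P.act P.xi (P.eta X)) - P.act (P.phi X) c + c * P.act X c) • P.xi := by
    intro X
    have n := hN X P.xi
    simp only [QPSCtx.nij, QPSCtx.twoDeta] at n
    rw [P.eta_xi, hact1 X, hpx, hbrsm (P.phi X) c P.xi, hbrsm X c P.xi, P.phi_add,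
      P.phi_smul, P.phi_smul, hpx, P.phi_sq (P.bracket X P.xi)] at n
    linear_combination (norm := module) n
  have hV2 : ∀ X : V, P.eta (P.bracket X P.xi)
      = -(P.act P.xi (P.eta X)) - P.act (P.phi X) c + c * P.act X c := by
    intro X
    have n2 := congrArg P.eta (hV1 X)
    simp only [hetas, P.eta_add, P.eta_smul, hetaphi, P.eta_xi] at n2
    linear_combination n2 + P.eta (P.bracket X P.xi) * hc2
  have hV2p : ∀ X : V, P.eta (P.bracket (P.phi X) P.xi)
      = -(c * P.act P.xi (P.eta X)) - P.act X c + c * P.act (P.phi X) c := by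
    intro X
    have e := hV2 (P.phi X)
    rw [hetaphi X, P.act_mul P.xi c (P.eta X), hactcpp X] at e
    linear_combination e
  have hV1' : ∀ X : V, P.phi (P.bracket (P.phi X) P.xi)
      = P.bracket X P.xi + c • P.bracket (P.phi X) P.xi - c • P.phi (P.bracket X P.xi)
        + (P.act P.xi (P.eta X) + P.act (P.phi X) c - c * P.act X c) • P.xi := by
    intro X
    linear_combination (norm := module) -(hV1 X)
  have hc2v : ∀ v : V, (c*c) • v = (0:C) • v := by intro v; rw [hc2]
  have hV3 : ∀ X : V, P.phi (P.bracket X P.xi)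
      = P.bracket (P.phi X) P.xi + (P.act X c - 2*c*P.act (P.phi X) c) • P.xi := by
    intro X
    have e := P.phi_sq (P.bracket (P.phi X) P.xi)
    rw [hV2p X, hV1' X, P.phi_add, hphis, P.phi_add, P.phi_smul, P.phi_smul, P.phi_smul,
      hV1' X, P.phi_sq (P.bracket X P.xi), hV2 X, hpx] at e
    linear_combination (norm := module) e - hc2v (P.bracket (P.phi X) P.xi)
      + hc2v (P.phi (P.bracket X P.xi)) + (P.act X c) • hc2v P.xi
  -- the dPhi(xi,Y,Z) identity
  have hKIL : ∀ Y Z : V,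
      P.g (P.nabla Y P.xi) (P.phi Z) + P.g (P.nabla (P.phi Z) P.xi) Y
      = c * P.act Y (P.eta Z) - c * P.act Z (P.eta Y) + c * P.eta (P.bracket Y Z)
        + P.eta Z * P.act Y c - 2 * P.eta Y * P.act Z c
        - 2 * c * P.act P.xi (P.eta Z) * P.eta Y := by
    intro Y Z
    have q := hP P.xi Y Z
    simp only [QPSCtx.Phi] at q
    rw [hgxi (P.phi Z), hgxi (P.phi Y), hetaphi Z, hetaphi Y,
      P.act_mul Y c (P.eta Z), P.act_mul Z c (P.eta Y)] at q
    rw [hpx, hgr (P.bracket Y Z) c P.xi, hgxiR (P.bracket Y Z)] at q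
    rw [P.metric_compat P.xi Y (P.phi Z)] at q
    rw [hbr P.xi Y, hgsl (P.nabla P.xi Y) (P.nabla Y P.xi) (P.phi Z)] at q
    have sk5 : P.g (P.bracket P.xi Z) (P.phi Y)
        = -(P.g (P.phi (P.bracket P.xi Z)) Y) + 2*c*P.eta (P.bracket P.xi Z)*P.eta Y := by
      linear_combination hSk (P.bracket P.xi Z) Y
    rw [sk5] at q
    rw [hbrne P.xi Z] at q
    rw [hphin, hetan] at q
    rw [hgln (P.phi (P.bracket Z P.xi)) Y] at q
    rw [hV3 Z] at q
    rw [hV2 Z] at q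
    rw [hbr (P.phi Z) P.xi] at q
    rw [P.g_addl, hgsl, P.g_smull, hgxi Y] at q
    rw [P.g_symm Y (P.nabla P.xi (P.phi Z))] at q
    linear_combination q + 2*P.act Z c*P.eta Y*hc2
  -- instance computations
  have hKA : ∀ Z : V, P.g (P.nabla P.xi P.xi) (P.phi Z)
      = c * P.act (P.phi Z) c + P.eta Z * P.act P.xi c - 2 * P.act Z c := by
    intro Z
    have i := hKIL P.xi Z
    rw [hA1 (P.phi Z), P.eta_xi, hact1 Z, hbrne P.xi Z, hetan, hV2 Z] at i
    linear_combination i - P.act Z c * hc2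
  have hKA2 : ∀ W : V, P.g (P.nabla P.xi P.xi) W
      = c * P.act W c - 2 * P.act (P.phi W) c := by
    intro W
    have i := hKA (P.phi W)
    rw [hactcpp W, hetaphi W, P.phi_sq W, hgsr, hgr, hA1 P.xi] at i
    linear_combination i
  have hD1 : ∀ Y : V, P.act Y c
      = -(c * P.act (P.phi Y) c) + 2*c*P.act P.xi (P.eta Y) + 2*P.eta Y*P.act P.xi c := by
    intro Y
    have j := hKIL Y P.xi
    rw [hpx, hgr (P.nabla Y P.xi) c P.xi, hA1 Y, P.nabla_smull, P.g_smull, hKA2 Y,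
      P.eta_xi, hact1 Y, hact1 P.xi, hV2 Y] at j
    linear_combination -j
  have hxic : P.act P.xi c = 0 := by
    have e := hD1 P.xi
    rw [hpx, hactcsm, P.eta_xi, hact1 P.xi] at e
    linear_combination -e + P.act P.xi c * hc2
  have hcYc : ∀ Y : V, c * P.act Y c = 0 := by
    intro Y
    linear_combination c * hD1 Y + (2*P.act P.xi (P.eta Y) - P.act (P.phi Y) c)*hc2
      + 2*c*P.eta Y*hxic
  have hphic : ∀ Y : V, P.act (P.phi Y) c = 0 := by
    intro Y
    have e := hD1 (P.phi Y)
    rw [hactcpp Y, hetaphi Y, P.act_mul P.xi c (P.eta Y)] at e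
    linear_combination e - hcYc Y + 5*c*P.eta Y*hxic + 2*P.act P.xi (P.eta Y)*hc2
  have hAxi : P.nabla P.xi P.xi = 0 := by
    apply P.g_nondeg
    intro W
    rw [hKA2 W, hphic W]
    linear_combination hcYc W
  have hZc : ∀ Z : V, P.act Z c = 0 := by
    intro Z
    have i := hKA Z
    rw [hAxi, hg0l, hphic Z, hxic] at i
    have e : P.act Z c + P.act Z c = 0 := by linear_combination i
    exact h2 _ e
  have hcxieta : ∀ Y : V, c * P.act P.xi (P.eta Y) = 0 := by
    intro Y
    have e := hD1 Y
    rw [hZc Y, hphic Y, hxic] at e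
    have e2 : c * P.act P.xi (P.eta Y) + c * P.act P.xi (P.eta Y) = 0 := by
      linear_combination -e
    exact h2 _ e2
  have hN4 : ∀ X : V, P.eta (P.bracket X P.xi) = -(P.act P.xi (P.eta X)) := by
    intro X; rw [hV2 X, hZc X, hphic X]; ring
  have hN4p : ∀ X : V, P.eta (P.bracket (P.phi X) P.xi) = 0 := by
    intro X
    rw [hV2p X, hZc X, hphic X]
    linear_combination -hcxieta X
  have hKIL2 : ∀ Y Z : V,
      P.g (P.nabla Y P.xi) (P.phi Z) + P.g (P.nabla (P.phi Z) P.xi) Y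
      = c * P.act Y (P.eta Z) - c * P.act Z (P.eta Y) + c * P.eta (P.bracket Y Z) := by
    intro Y Z
    have i := hKIL Y Z
    rw [hZc Y, hZc Z] at i
    linear_combination i - 2*P.eta Y * hcxieta Z
  -- consequences of normality for twoDeta
  have hF7 : ∀ X Y : V, P.twoDeta X (P.phi Y)
      = P.eta (P.bracket (P.phi X) Y) - P.act (P.phi X) (P.eta Y)
        - c * P.twoDeta X Y - c * P.eta (P.bracket X Y) + c * P.act X (P.eta Y) := by
    intro X Y
    have s := hstar X (P.phi Y)
    rw [P.phi_sq Y, hbrsub (P.phi X) Y (P.eta Y), hbrsub X Y (P.eta Y), hetas, hetas,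
      hetas, hetas, P.eta_smul, P.eta_smul, P.eta_smul, P.eta_smul, P.eta_xi,
      hN4p X, hN4 X] at s
    linear_combination -s - hstarc X Y - P.eta Y * hcxieta X
  have hS : ∀ X Y : V, P.twoDeta (P.phi X) Y + P.twoDeta X (P.phi Y) = 0 := by
    intro X Y
    have e5 : P.twoDeta (P.phi X) Y = P.act (P.phi X) (P.eta Y) - c * P.act Y (P.eta X)
        - P.eta (P.bracket (P.phi X) Y) := by
      rw [htd (P.phi X) Y, hetaphi X, P.act_mul Y c (P.eta X), hZc Y]
      ring
    linear_combination e5 + hF7 X Y - c * htd X Y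
  -- conclusion
  intro X
  have key : ∀ Y : V, P.g (P.nabla (P.phi X) P.xi - P.phi (P.nabla X P.xi)) Y = 0 := by
    intro Y
    rw [hgsl]
    have hq : P.g (P.phi (P.nabla X P.xi)) Y = -(P.g (P.nabla X P.xi) (P.phi Y)) := by
      rw [hSk (P.nabla X P.xi) Y, hA1' X]; ring
    rw [hq]
    have d1 := hdE (P.phi X) Y
    have d2 := hdE X (P.phi Y)
    have k1 := hKIL2 Y X
    have k2 := hKIL2 X Y
    have hba : P.eta (P.bracket Y X) = -(P.eta (P.bracket X Y)) := by
      rw [hbrne Y X, hetan]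
    have s := hS X Y
    have e2 : (P.g (P.nabla (P.phi X) P.xi) Y + P.g (P.nabla X P.xi) (P.phi Y))
        + (P.g (P.nabla (P.phi X) P.xi) Y + P.g (P.nabla X P.xi) (P.phi Y)) = 0 := by
      linear_combination d1 + d2 + k1 + k2 + s + c * hba
    have e3 := h2 _ e2
    linear_combination e3
  have e4 := P.g_nondeg _ key
  show P.nabla (P.phi X) P.xi = P.phi (P.nabla X P.xi)
  linear_combination (norm := module) e4
end
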